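/- Let G be a commutative multiplicative group, K a G-graded field, g ∈ G, and f a nonzero homogeneous polynomial in K[g⁻¹T]. Then there exists a finite extension of G-graded fields L/K such that in L[g⁻¹T] the polynomial f splits completely into a product of homogeneous polynomials of degree at most 1; in particular, if f is monic then f = (T − x₁)···(T − x_n) with each x_i a homogeneous element of L of grading g. -/

import Mathlib

universe u v

/-- A `G`-graded commutative ring structure on `A`: graded pieces `deg g`,
multiplicativity of the grading, and an internal direct sum decomposition
recorded by the homogeneous-component function `comp`. -/
structure GradedStr (G : Type u) [CommGroup G] (A : Type v) [CommRing A] where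
  deg : G → AddSubgroup A
  one_mem : (1 : A) ∈ deg 1
  mul_mem : ∀ {g h : G} {a b : A}, a ∈ deg g → b ∈ deg h → a * b ∈ deg (g * h)
  comp : A → G → A
  comp_mem : ∀ a g, comp a g ∈ deg g
  comp_add : ∀ a b g, comp (a + b) g = comp a g + comp b g
  comp_of_mem : ∀ {a : A} {g : G}, a ∈ deg g → comp a g = a
  comp_of_mem_ne : ∀ {a : A} {g g' : G}, a ∈ deg g → g' ≠ g → comp a g' = 0
  finite_support : ∀ a : A, (Function.support (comp a)).Finite
  sum_comp : ∀ a : A, ∑ᶠ g, comp a g = a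

namespace GradedStr

variable {G : Type u} [CommGroup G] {A : Type v} [CommRing A]

/-- `a` is homogeneous: it lies in some graded piece. -/
def IsHomog (𝒜 : GradedStr G A) (a : A) : Prop := ∃ g, a ∈ 𝒜.deg g

/-- A `G`-graded field: a nonzero graded ring in which every nonzero homogeneous
element is invertible. -/
def IsGradedField (𝒜 : GradedStr G A) : Prop :=
  Nontrivial A ∧ ∀ a : A, 𝒜.IsHomog a → a ≠ 0 → IsUnit a

/-- A graded subring: a subring stable under taking homogeneous components. -/
def IsGradedSubring (𝒜 : GradedStr G A) (S : Subring A) : Prop :=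
  ∀ x ∈ S, ∀ g, 𝒜.comp x g ∈ S

/-- A graded subfield of a graded field: a graded subring containing the inverses of
its nonzero homogeneous elements. -/
def IsGradedSubfield (𝒜 : GradedStr G A) (S : Subring A) : Prop :=
  𝒜.IsGradedSubring S ∧ ∀ x ∈ S, 𝒜.IsHomog x → x ≠ 0 → Ring.inverse x ∈ S

/-- The additive subgroup of homogeneous polynomials of grading `h` in `K[g₀⁻¹ T]`,
the polynomial ring in which `T` is declared homogeneous of grading `g₀`: the
coefficient of `T^n` must be homogeneous of grading `h * g₀⁻ⁿ`. -/
def polyDeg (𝒜 : GradedStr G A) (g₀ h : G) : AddSubgroup (Polynomial A) where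
  carrier := {p | ∀ n : ℕ, p.coeff n ∈ 𝒜.deg (h * (g₀ ^ n)⁻¹)}
  zero_mem' := by intro n; simpa using (𝒜.deg (h * (g₀ ^ n)⁻¹)).zero_mem
  add_mem' := by
    intro p q hp hq n
    rw [Polynomial.coeff_add]
    exact (𝒜.deg _).add_mem (hp n) (hq n)
  neg_mem' := by
    intro p hp n
    rw [Polynomial.coeff_neg]
    exact (𝒜.deg _).neg_mem (hp n)

/-- A homogeneous polynomial in `K[g₀⁻¹T]`. -/
def IsHomogPoly (𝒜 : GradedStr G A) (g₀ : G) (p : Polynomial A) : Prop :=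
  ∃ h, p ∈ 𝒜.polyDeg g₀ h

/-- The graded fraction field of a graded subring of a graded field, computed inside
the ambient graded field: the subring generated by `S` together with the inverses of
the nonzero homogeneous elements of `S`. -/
def fracIn (𝒜 : GradedStr G A) (S : Subring A) : Subring A :=
  Subring.closure (↑S ∪ {y : A | ∃ x ∈ S, x ≠ 0 ∧ 𝒜.IsHomog x ∧ y = Ring.inverse x})

end GradedStr

/-- `x` is integral over the subring `S` (satisfies a monic polynomial equation with
coefficients in `S`). -/
def IntegralOver {A : Type v} [CommRing A] (S : Subring A) (x : A) : Prop :=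
  ∃ p : Polynomial A, p.Monic ∧ (∀ n, p.coeff n ∈ S) ∧ Polynomial.eval x p = 0

/-- Algebraic independence of a family of elements over a subring: the evaluation map
from the (multivariate) polynomial ring is injective.  (For homogeneous elements this
is graded algebraic independence, the grading playing no role in injectivity.) -/
def AlgIndepOver {A : Type v} [CommRing A] {ι : Type*} (S : Subring A) (T : ι → A) : Prop :=
  Function.Injective (MvPolynomial.eval₂Hom S.subtype T)

/-- A graded valuation ring of the graded subfield `F` of the ambient graded field:
a graded subring `O ⊆ F` such that every nonzero homogeneous element `f` of `F`
satisfies `f ∈ O` or `f⁻¹ ∈ O`. -/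
def IsGVRofSubfield {G : Type u} [CommGroup G] {A : Type v} [CommRing A]
    (𝒜 : GradedStr G A) (F : Subring A) (O : Subring A) : Prop :=
  O ≤ F ∧ 𝒜.IsGradedSubring O ∧
    ∀ f ∈ F, f ≠ 0 → 𝒜.IsHomog f → f ∈ O ∨ Ring.inverse f ∈ O
namespace GradedStr

variable {G : Type u} [CommGroup G] {A : Type v} [CommRing A] (𝒜 : GradedStr G A)

theorem comp_zero (g : G) : 𝒜.comp 0 g = 0 := by
  have := 𝒜.comp_add 0 0 g
  simpa using this.symm

/-- `comp` at a fixed grading, as an additive monoid hom. -/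
def compHom (g : G) : A →+ A where
  toFun a := 𝒜.comp a g
  map_zero' := 𝒜.comp_zero g
  map_add' a b := 𝒜.comp_add a b g

@[simp] theorem compHom_apply (g : G) (a : A) : 𝒜.compHom g a = 𝒜.comp a g := rfl

theorem mem_deg_iff_comp (a : A) (g : G) : a ∈ 𝒜.deg g ↔ 𝒜.comp a g = a :=
  ⟨𝒜.comp_of_mem, fun h => h ▸ 𝒜.comp_mem a g⟩

theorem deg_unique [Nontrivial A] {a : A} {g g' : G} (ha : a ≠ 0)
    (h : a ∈ 𝒜.deg g) (h' : a ∈ 𝒜.deg g') : g = g' := by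
  by_contra hne
  have h1 : 𝒜.comp a g' = a := 𝒜.comp_of_mem h'
  have h2 : 𝒜.comp a g' = 0 := 𝒜.comp_of_mem_ne h (Ne.symm hne)
  exact ha (h1 ▸ h2 ▸ rfl)

theorem comp_mul_left {a : A} {g₁ : G} (ha : a ∈ 𝒜.deg g₁) (b : A) (g₂ : G) :
    𝒜.comp (a * b) (g₁ * g₂) = a * 𝒜.comp b g₂ := by
  classical
  have hb := 𝒜.sum_comp b
  set s := (𝒜.finite_support b).toFinset with hs
  have hsub : Function.support (𝒜.comp b) ⊆ (s : Set G) := by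
    intro g hg; simpa [hs] using hg
  have hb'' : ∑ g ∈ s, 𝒜.comp b g = b := by
    rw [← finsum_eq_sum_of_support_subset _ hsub]; exact hb
  have hb' : b = ∑ g ∈ s, 𝒜.comp b g := hb''.symm
  conv_lhs => rw [hb']
  conv_rhs => rw [hb']
  rw [Finset.mul_sum]
  rw [show 𝒜.comp (∑ i ∈ s, a * 𝒜.comp b i) (g₁ * g₂)
      = ∑ i ∈ s, 𝒜.comp (a * 𝒜.comp b i) (g₁ * g₂) from
    map_sum (𝒜.compHom (g₁ * g₂)) _ s]
  rw [show 𝒜.comp (∑ g ∈ s, 𝒜.comp b g) g₂ = ∑ g ∈ s, 𝒜.comp (𝒜.comp b g) g₂ from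
    map_sum (𝒜.compHom g₂) _ s, Finset.mul_sum]
  apply Finset.sum_congr rfl
  intro g _
  by_cases hg : g = g₂
  · subst hg
    rw [𝒜.comp_of_mem (𝒜.mul_mem ha (𝒜.comp_mem b g)),
      𝒜.comp_of_mem (𝒜.comp_mem b g)]
  · rw [𝒜.comp_of_mem_ne (𝒜.mul_mem ha (𝒜.comp_mem b g))
      (fun h => hg (mul_left_cancel h).symm),
      𝒜.comp_of_mem_ne (𝒜.comp_mem b g) (Ne.symm hg), mul_zero]

theorem sum_comp_shift (a : A) (w : G) : ∑ᶠ g : G, 𝒜.comp a (g * w) = a := by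
  have := finsum_eq_of_bijective (β := G) (fun g => g * w)
    (Group.mulRight_bijective w) (f := fun g => 𝒜.comp a (g * w))
    (g := fun x => 𝒜.comp a x) (fun _ => rfl)
  rw [this, 𝒜.sum_comp a]

end GradedStr
namespace GradedStr

open Polynomial

variable {G : Type u} [CommGroup G] {A : Type v} [CommRing A] (𝒜 : GradedStr G A) (g₀ : G)

/-- The homogeneous component of grading `h` of a polynomial in `K[g₀⁻¹T]`. -/
noncomputable def pPiece (h : G) (q : A[X]) : A[X] :=
  ∑ n ∈ q.support, Polynomial.C (𝒜.comp (q.coeff n) (h * (g₀ ^ n)⁻¹)) * Polynomial.X ^ n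

theorem pPiece_coeff (h : G) (q : A[X]) (n : ℕ) :
    (𝒜.pPiece g₀ h q).coeff n = 𝒜.comp (q.coeff n) (h * (g₀ ^ n)⁻¹) := by
  classical
  rw [pPiece, finset_sum_coeff]
  by_cases hn : n ∈ q.support
  · rw [Finset.sum_eq_single n]
    · simp
    · intro m _ hne
      simp [coeff_C_mul, coeff_X_pow, Ne.symm hne]
    · intro h'; exact absurd hn h'
  · have h0 : q.coeff n = 0 := by simpa using hn
    rw [h0, 𝒜.comp_zero]
    apply Finset.sum_eq_zero
    intro m hm
    have : m ≠ n := fun h => hn (h ▸ hm)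
    simp [coeff_C_mul, coeff_X_pow, Ne.symm this]

theorem pPiece_mem (h : G) (q : A[X]) : 𝒜.pPiece g₀ h q ∈ 𝒜.polyDeg g₀ h := by
  intro n
  rw [pPiece_coeff]
  exact 𝒜.comp_mem _ _

theorem pPiece_of_mem {h : G} {q : A[X]} (hq : q ∈ 𝒜.polyDeg g₀ h) :
    𝒜.pPiece g₀ h q = q := by
  ext n
  rw [pPiece_coeff]
  exact 𝒜.comp_of_mem (hq n)

theorem pPiece_of_mem_ne {h h' : G} {q : A[X]} (hq : q ∈ 𝒜.polyDeg g₀ h) (hne : h' ≠ h) :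
    𝒜.pPiece g₀ h' q = 0 := by
  ext n
  rw [pPiece_coeff]
  rw [coeff_zero]
  exact 𝒜.comp_of_mem_ne (hq n) (by simpa using hne)

theorem pPiece_degree_le (h : G) (q : A[X]) : (𝒜.pPiece g₀ h q).degree ≤ q.degree := by
  refine (degree_le_iff_coeff_zero _ _).mpr ?_
  intro m hm
  rw [pPiece_coeff, coeff_eq_zero_of_degree_lt hm, 𝒜.comp_zero]

theorem pPiece_add (h : G) (q r : A[X]) :
    𝒜.pPiece g₀ h (q + r) = 𝒜.pPiece g₀ h q + 𝒜.pPiece g₀ h r := by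
  ext n
  simp [pPiece_coeff, 𝒜.comp_add]

theorem pPiece_mul_left {hq : G} {q : A[X]} (hqm : q ∈ 𝒜.polyDeg g₀ hq) (h : G) (c : A[X]) :
    𝒜.pPiece g₀ (hq * h) (q * c) = q * 𝒜.pPiece g₀ h c := by
  classical
  ext n
  rw [pPiece_coeff, coeff_mul, coeff_mul]
  rw [show 𝒜.comp (∑ x ∈ Finset.HasAntidiagonal.antidiagonal n, q.coeff x.1 * c.coeff x.2)
      (hq * h * (g₀ ^ n)⁻¹)
      = ∑ x ∈ Finset.HasAntidiagonal.antidiagonal n, 𝒜.comp (q.coeff x.1 * c.coeff x.2)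
        (hq * h * (g₀ ^ n)⁻¹) from map_sum (𝒜.compHom _) _ _]
  apply Finset.sum_congr rfl
  intro ij hij
  have hij' : ij.1 + ij.2 = n := Finset.HasAntidiagonal.mem_antidiagonal.mp hij
  have key : hq * h * (g₀ ^ n)⁻¹ = (hq * (g₀ ^ ij.1)⁻¹) * (h * (g₀ ^ ij.2)⁻¹) := by
    rw [← hij', pow_add, mul_inv, mul_mul_mul_comm]
  rw [key, 𝒜.comp_mul_left (hqm ij.1), pPiece_coeff]

end GradedStr
namespace GradedStr

open Polynomial

variable {G : Type u} [CommGroup G] {A : Type v} [CommRing A] (𝒜 : GradedStr G A) (g₀ : G)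

theorem divByMonic_modByMonic_mem [Nontrivial A] {h hq : G} {p q : A[X]}
    (hmon : q.Monic) (hqm : q ∈ 𝒜.polyDeg g₀ hq) (hp : p ∈ 𝒜.polyDeg g₀ h) :
    p /ₘ q ∈ 𝒜.polyDeg g₀ (hq⁻¹ * h) ∧ p %ₘ q ∈ 𝒜.polyDeg g₀ h := by
  have hdiv := modByMonic_add_div p q
  set c' := 𝒜.pPiece g₀ (hq⁻¹ * h) (p /ₘ q) with hc'
  set r' := 𝒜.pPiece g₀ h (p %ₘ q) with hr'
  have key : r' + q * c' = p := by
    have := congrArg (𝒜.pPiece g₀ h) hdiv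
    rwa [pPiece_add, 𝒜.pPiece_of_mem g₀ hp,
      show 𝒜.pPiece g₀ h (q * (p /ₘ q)) = 𝒜.pPiece g₀ (hq * (hq⁻¹ * h)) (q * (p /ₘ q)) by
        rw [mul_inv_cancel_left],
      𝒜.pPiece_mul_left g₀ hqm] at this
  have hdeg : r'.degree < q.degree :=
    lt_of_le_of_lt (𝒜.pPiece_degree_le g₀ h _) (degree_modByMonic_lt p hmon)
  obtain ⟨h1, h2⟩ := div_modByMonic_unique c' r' hmon ⟨key, hdeg⟩
  exact ⟨h1 ▸ 𝒜.pPiece_mem g₀ _ _, h2 ▸ 𝒜.pPiece_mem g₀ _ _⟩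

theorem pPiece_support_finite (q : A[X]) :
    (Function.support fun h => 𝒜.pPiece g₀ h q).Finite := by
  classical
  apply Set.Finite.subset
    (Set.Finite.biUnion (q.support.finite_toSet)
      (fun n _ => ((𝒜.finite_support (q.coeff n)).image (fun g => g * g₀ ^ n))))
  intro h hh
  have : ∃ n, (𝒜.pPiece g₀ h q).coeff n ≠ 0 := by
    by_contra hc
    push_neg at hc
    exact hh (Polynomial.ext hc)
  obtain ⟨n, hn⟩ := this
  rw [𝒜.pPiece_coeff] at hn
  have hqn : q.coeff n ≠ 0 := fun h0 => hn (h0 ▸ 𝒜.comp_zero _)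
  refine Set.mem_biUnion (by simpa using hqn) ?_
  exact ⟨h * (g₀ ^ n)⁻¹, hn, by group⟩

theorem sum_pPiece (q : A[X]) : ∑ᶠ h, 𝒜.pPiece g₀ h q = q := by
  ext n
  have hco := (Polynomial.lcoeff A n).toAddMonoidHom.map_finsum
      (f := fun h => 𝒜.pPiece g₀ h q) (𝒜.pPiece_support_finite g₀ q)
  simp only [LinearMap.toAddMonoidHom_coe, lcoeff_apply] at hco
  rw [hco]
  simp only [𝒜.pPiece_coeff]
  exact 𝒜.sum_comp_shift (q.coeff n) ((g₀ ^ n)⁻¹)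

theorem polyDeg_map {B : Type*} [CommRing B] (ℬ : GradedStr G B) (φ : A →+* B)
    (hφ : ∀ g : G, ∀ a ∈ 𝒜.deg g, φ a ∈ ℬ.deg g) {h : G} {p : A[X]}
    (hp : p ∈ 𝒜.polyDeg g₀ h) : p.map φ ∈ ℬ.polyDeg g₀ h := by
  intro n
  rw [coeff_map]
  exact hφ _ _ (hp n)

end GradedStr
namespace GradedStr

open Polynomial

variable {G : Type u} [CommGroup G] {A : Type v} [CommRing A] (𝒜 : GradedStr G A) (g₀ : G)

theorem inv_mem {a : A} {g : G} (ha : a ∈ 𝒜.deg g) (u : Aˣ) (hu : (u : A) = a) :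
    ((u⁻¹ : Aˣ) : A) ∈ 𝒜.deg g⁻¹ := by
  have h1 : a * ((u⁻¹ : Aˣ) : A) = 1 := by rw [← hu]; exact u.mul_inv
  have h2 : 𝒜.comp (a * ((u⁻¹ : Aˣ) : A)) (g * g⁻¹) = a * 𝒜.comp ((u⁻¹ : Aˣ) : A) g⁻¹ :=
    𝒜.comp_mul_left ha _ _
  rw [h1, mul_inv_cancel, 𝒜.comp_of_mem 𝒜.one_mem] at h2
  have h3 : ((u⁻¹ : Aˣ) : A) * (a * 𝒜.comp ((u⁻¹ : Aˣ) : A) g⁻¹)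
      = ((u⁻¹ : Aˣ) : A) := by rw [← h2, mul_one]
  rw [← mul_assoc, mul_comm ((u⁻¹ : Aˣ) : A) a, h1, one_mul] at h3
  exact h3 ▸ 𝒜.comp_mem _ _

theorem C_mem {a : A} {g : G} (ha : a ∈ 𝒜.deg g) : (Polynomial.C a) ∈ 𝒜.polyDeg g₀ g := by
  intro n
  rcases n with _ | n
  · simpa using ha
  · simp only [coeff_C]
    simpa using (𝒜.deg _).zero_mem

theorem X_mem : (Polynomial.X : A[X]) ∈ 𝒜.polyDeg g₀ g₀ := by
  intro n
  rcases n with _ | n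
  · simpa using (𝒜.deg _).zero_mem
  · rcases n with _ | n
    · simpa using 𝒜.one_mem
    · simp only [coeff_X]
      norm_num

theorem polyDeg_mul {g h : G} {q r : A[X]} (hq : q ∈ 𝒜.polyDeg g₀ g)
    (hr : r ∈ 𝒜.polyDeg g₀ h) : q * r ∈ 𝒜.polyDeg g₀ (g * h) := by
  intro n
  rw [coeff_mul]
  apply AddSubgroup.sum_mem
  intro ij hij
  have hij' : ij.1 + ij.2 = n := Finset.HasAntidiagonal.mem_antidiagonal.mp hij
  have : g * h * (g₀ ^ n)⁻¹ = (g * (g₀ ^ ij.1)⁻¹) * (h * (g₀ ^ ij.2)⁻¹) := by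
    rw [← hij', pow_add, mul_inv, mul_mul_mul_comm]
  rw [this]
  exact 𝒜.mul_mem (hq ij.1) (hr ij.2)

end GradedStr
set_option linter.unusedSectionVars false
namespace GradedStr

open Polynomial
open AdjoinRoot (modByMonicHom mk_leftInverse modByMonicHom_mk)

variable {G : Type u} [CommGroup G] {K : Type v} [CommRing K] [Nontrivial K]
  (𝒜 : GradedStr G K) (g₀ : G) {p : K[X]} (hmon : p.Monic)

/-- Canonical representative of an element of `AdjoinRoot p`. -/
noncomputable def aRep (x : AdjoinRoot p) : K[X] := AdjoinRoot.modByMonicHom hmon x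

theorem aRep_mk (q : K[X]) : aRep hmon (AdjoinRoot.mk p q) = q %ₘ p := modByMonicHom_mk hmon q

theorem mk_aRep (x : AdjoinRoot p) : AdjoinRoot.mk p (aRep hmon x) = x := mk_leftInverse hmon x

theorem aRep_add (x y : AdjoinRoot p) :
    aRep hmon (x + y) = aRep hmon x + aRep hmon y := map_add _ x y

theorem aRep_degree_lt (x : AdjoinRoot p) : (aRep hmon x).degree < p.degree := by
  have h : aRep hmon x = (aRep hmon x) %ₘ p := by
    conv_lhs => rw [← mk_aRep hmon x]
    rw [aRep_mk]
  rw [h]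
  exact degree_modByMonic_lt _ hmon

theorem aRep_zero : aRep hmon (0 : AdjoinRoot p) = 0 := map_zero _

theorem aRep_eq_zero_iff (x : AdjoinRoot p) : aRep hmon x = 0 ↔ x = 0 := by
  constructor
  · intro h
    have := mk_aRep hmon x
    rw [h, map_zero] at this
    exact this.symm
  · rintro rfl; exact aRep_zero hmon

theorem aRep_one (hd : 1 ≤ p.natDegree) : aRep hmon (1 : AdjoinRoot p) = 1 := by
  have : (1 : AdjoinRoot p) = AdjoinRoot.mk p 1 := (map_one _).symm
  rw [this, aRep_mk hmon, modByMonic_eq_self_iff hmon]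
  calc degree (1 : K[X]) = 0 := degree_one
  _ < p.degree := by
      rw [degree_eq_natDegree hmon.ne_zero]
      exact_mod_cast hd

theorem aRep_of (hd : 1 ≤ p.natDegree) (a : K) : aRep hmon (AdjoinRoot.of p a) = Polynomial.C a := by
  rw [show (AdjoinRoot.of p) a = AdjoinRoot.mk p (Polynomial.C a) from rfl, aRep_mk hmon, modByMonic_eq_self_iff hmon]
  apply lt_of_le_of_lt (degree_C_le)
  rw [degree_eq_natDegree hmon.ne_zero]
  exact_mod_cast hd

/-- The graded structure on `AdjoinRoot p` for `p` monic homogeneous. -/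
noncomputable def adjoinStr (hd : 1 ≤ p.natDegree) (hp : G) (hph : p ∈ 𝒜.polyDeg g₀ hp) :
    GradedStr G (AdjoinRoot p) where
  deg g := (𝒜.polyDeg g₀ g).comap (AdjoinRoot.modByMonicHom hmon).toAddMonoidHom
  one_mem := by
    simp only [AddSubgroup.mem_comap, LinearMap.toAddMonoidHom_coe]
    show aRep hmon 1 ∈ _
    rw [aRep_one hmon hd]
    exact 𝒜.C_mem g₀ 𝒜.one_mem
  mul_mem := by
    intro g h x y hx hy
    simp only [AddSubgroup.mem_comap, LinearMap.toAddMonoidHom_coe] at hx hy ⊢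
    have hxy : (x * y) = AdjoinRoot.mk p (aRep hmon x * aRep hmon y) := by
      rw [map_mul, mk_aRep, mk_aRep]
    show aRep hmon (x * y) ∈ _
    rw [hxy, aRep_mk]
    exact (𝒜.divByMonic_modByMonic_mem g₀ hmon hph (𝒜.polyDeg_mul g₀ hx hy)).2
  comp x g := AdjoinRoot.mk p (𝒜.pPiece g₀ g (aRep hmon x))
  comp_mem := by
    intro x g
    simp only [AddSubgroup.mem_comap, LinearMap.toAddMonoidHom_coe]
    show aRep hmon (AdjoinRoot.mk p (𝒜.pPiece g₀ g (aRep hmon x))) ∈ _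
    have hdeg : (𝒜.pPiece g₀ g (aRep hmon x)).degree < p.degree :=
      lt_of_le_of_lt (𝒜.pPiece_degree_le g₀ g _) (aRep_degree_lt hmon x)
    rw [aRep_mk hmon, (modByMonic_eq_self_iff hmon).mpr hdeg]
    exact 𝒜.pPiece_mem g₀ g _
  comp_add := by
    intro a b g
    show AdjoinRoot.mk p (𝒜.pPiece g₀ g (aRep hmon (a + b)))
      = AdjoinRoot.mk p (𝒜.pPiece g₀ g (aRep hmon a)) + AdjoinRoot.mk p (𝒜.pPiece g₀ g (aRep hmon b))
    rw [aRep_add, pPiece_add, map_add]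
  comp_of_mem := by
    intro x g hx
    simp only [AddSubgroup.mem_comap, LinearMap.toAddMonoidHom_coe] at hx
    have hx' : aRep hmon x ∈ 𝒜.polyDeg g₀ g := hx
    show AdjoinRoot.mk p (𝒜.pPiece g₀ g (aRep hmon x)) = x
    rw [𝒜.pPiece_of_mem g₀ hx', mk_aRep]
  comp_of_mem_ne := by
    intro x g g' hx hne
    simp only [AddSubgroup.mem_comap, LinearMap.toAddMonoidHom_coe] at hx
    have hx' : aRep hmon x ∈ 𝒜.polyDeg g₀ g := hx
    show AdjoinRoot.mk p (𝒜.pPiece g₀ g' (aRep hmon x)) = 0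
    rw [𝒜.pPiece_of_mem_ne g₀ hx' hne, map_zero]
  finite_support := by
    intro x
    apply Set.Finite.subset (𝒜.pPiece_support_finite g₀ (aRep hmon x))
    intro g hg
    show 𝒜.pPiece g₀ g (aRep hmon x) ≠ 0
    replace hg : AdjoinRoot.mk p (𝒜.pPiece g₀ g (aRep hmon x)) ≠ 0 := hg
    intro h0
    exact hg (by rw [h0, map_zero])
  sum_comp := by
    intro x
    show ∑ᶠ g, AdjoinRoot.mk p (𝒜.pPiece g₀ g (aRep hmon x)) = x
    have := AddMonoidHom.map_finsum (AdjoinRoot.mk p).toAddMonoidHom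
      (f := fun g => 𝒜.pPiece g₀ g (aRep hmon x)) (𝒜.pPiece_support_finite g₀ _)
    simp only [RingHom.toAddMonoidHom_eq_coe, AddMonoidHom.coe_coe] at this
    rw [← this, 𝒜.sum_pPiece g₀, mk_aRep]

theorem adjoinStr_mem_deg_iff (hp : G) (hph : p ∈ 𝒜.polyDeg g₀ hp) (x : AdjoinRoot p) (g : G) :
    x ∈ (𝒜.adjoinStr g₀ hmon hd hp hph).deg g ↔ aRep hmon x ∈ 𝒜.polyDeg g₀ g :=
  Iff.rfl

end GradedStr
set_option linter.unusedSectionVars false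
namespace GradedStr

open Polynomial

variable {G : Type u} [CommGroup G] {K : Type v} [CommRing K]
  (𝒜 : GradedStr G K) (g₀ : G)

theorem degC_lt {p : K[X]} [Nontrivial K] (hmon : p.Monic) (hd : 1 ≤ p.natDegree) (a : K) :
    (Polynomial.C a).degree < p.degree := by
  apply lt_of_le_of_lt degree_C_le
  rw [degree_eq_natDegree hmon.ne_zero]
  exact_mod_cast hd

/-- Key Euclidean step: every nonzero homogeneous polynomial of degree less than that
of `p` becomes a unit in `AdjoinRoot p`, provided `p` is monic homogeneous and has no
monic homogeneous proper divisor of positive degree. -/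
theorem isUnit_mk_of_homog (hK : 𝒜.IsGradedField) {p : K[X]} (hmon : p.Monic)
    {hp : G} (hph : p ∈ 𝒜.polyDeg g₀ hp)
    (hirr : ∀ q : K[X], q.Monic → (∃ h, q ∈ 𝒜.polyDeg g₀ h) → 1 ≤ q.natDegree →
      q.natDegree < p.natDegree → ¬ q ∣ p) :
    ∀ q : K[X], (∃ h, q ∈ 𝒜.polyDeg g₀ h) → q ≠ 0 → q.natDegree < p.natDegree →
      IsUnit (AdjoinRoot.mk p q) := by
  have : Nontrivial K := hK.1
  suffices H : ∀ N : ℕ, ∀ q : K[X], q.natDegree ≤ N → (∃ h, q ∈ 𝒜.polyDeg g₀ h) →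
      q ≠ 0 → q.natDegree < p.natDegree → IsUnit (AdjoinRoot.mk p q) from
    fun q hq h0 hdq => H q.natDegree q le_rfl hq h0 hdq
  intro N
  induction N using Nat.strong_induction_on with
  | _ N IH =>
    rintro q hqN ⟨h, hqh⟩ hq0 hqd
    set d := q.natDegree with hdq
    have hlc0 : q.leadingCoeff ≠ 0 := leadingCoeff_ne_zero.mpr hq0
    have hlcm : q.leadingCoeff ∈ 𝒜.deg (h * (g₀ ^ d)⁻¹) := hqh d
    have hu : IsUnit q.leadingCoeff := hK.2 _ ⟨_, hlcm⟩ hlc0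
    set u := hu.unit with huu
    have hucoe : (u : K) = q.leadingCoeff := hu.unit_spec
    set w : K := ((u⁻¹ : Kˣ) : K) with hw
    have hwl : w * q.leadingCoeff = 1 := by rw [hw, ← hucoe]; exact u.inv_mul
    set q' := Polynomial.C w * q with hq'
    have hq'mon : q'.Monic := monic_C_mul_of_mul_leadingCoeff_eq_one hwl
    have hwmem : w ∈ 𝒜.deg (h * (g₀ ^ d)⁻¹)⁻¹ := 𝒜.inv_mem hlcm u hucoe
    have hq'h : q' ∈ 𝒜.polyDeg g₀ ((h * (g₀ ^ d)⁻¹)⁻¹ * h) :=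
      𝒜.polyDeg_mul g₀ (𝒜.C_mem g₀ hwmem) hqh
    have hdq' : q'.natDegree = d := by
      apply le_antisymm (natDegree_C_mul_le w q)
      have : q = Polynomial.C (q.leadingCoeff) * q' := by
        rw [hq', ← mul_assoc, ← Polynomial.C_mul, mul_comm q.leadingCoeff w, hwl,
          Polynomial.C_1, one_mul]
      have h2 : q.natDegree ≤ q'.natDegree := by
        conv_lhs => rw [this]
        exact natDegree_C_mul_le _ q'
      exact h2
    have hqq' : AdjoinRoot.mk p q = AdjoinRoot.mk p (Polynomial.C q.leadingCoeff)
        * AdjoinRoot.mk p q' := by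
      rw [← map_mul]
      congr 1
      rw [hq', ← mul_assoc, ← Polynomial.C_mul, mul_comm q.leadingCoeff w, hwl,
        Polynomial.C_1, one_mul]
    have hCunit : IsUnit (AdjoinRoot.mk p (Polynomial.C q.leadingCoeff)) :=
      hu.map ((AdjoinRoot.mk p).comp Polynomial.C)
    suffices hq'unit : IsUnit (AdjoinRoot.mk p q') by
      rw [hqq']; exact hCunit.mul hq'unit
    rcases Nat.eq_zero_or_pos q'.natDegree with h0 | hpos
    · rw [hq'mon.natDegree_eq_zero.mp h0, map_one]
      exact isUnit_one
    obtain ⟨hcmem, hrmem⟩ := 𝒜.divByMonic_modByMonic_mem g₀ hq'mon hq'h hph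
    by_cases hr : p %ₘ q' = 0
    · exfalso
      refine hirr q' hq'mon ⟨_, hq'h⟩ hpos (hdq' ▸ hqd) ?_
      refine ⟨p /ₘ q', ?_⟩
      have := modByMonic_add_div p q'
      rw [hr, zero_add] at this
      exact this.symm
    · have hrd : (p %ₘ q').natDegree < q'.natDegree :=
        natDegree_lt_natDegree hr (degree_modByMonic_lt p hq'mon)
      have hrunit : IsUnit (AdjoinRoot.mk p (p %ₘ q')) := by
        refine IH (p %ₘ q').natDegree ?_ _ le_rfl ⟨_, hrmem⟩ hr ?_
        · omega
        · omega
      have hkey : AdjoinRoot.mk p (p %ₘ q') = AdjoinRoot.mk p q' * (-(AdjoinRoot.mk p (p /ₘ q'))) := by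
        have := congrArg (AdjoinRoot.mk p) (modByMonic_add_div p q')
        rw [map_add, map_mul, AdjoinRoot.mk_self] at this
        rw [mul_neg]
        linear_combination this
      rw [hkey] at hrunit
      exact isUnit_of_mul_isUnit_left hrunit

end GradedStr
namespace GradedStr

open Polynomial

variable {G : Type u} [CommGroup G]

/-- A finite extension of graded fields along `φ`. -/
def IsFinExt {K : Type v} [CommRing K] {L : Type v} [CommRing L]
    (𝒜 : GradedStr G K) (ℬ : GradedStr G L) (φ : K →+* L) : Prop :=
  ℬ.IsGradedField ∧ Function.Injective φ ∧ (∀ g : G, ∀ a ∈ 𝒜.deg g, φ a ∈ ℬ.deg g) ∧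
  ∃ (n : ℕ) (e : Fin n → L), ∀ y : L, ∃! c : Fin n → K, y = ∑ i, φ (c i) * e i

variable {K : Type v} [CommRing K] (𝒜 : GradedStr G K) (g₀ : G)

theorem isFinExt_refl (hK : 𝒜.IsGradedField) : 𝒜.IsFinExt 𝒜 (RingHom.id K) := by
  refine ⟨hK, fun a b h => h, fun g a ha => ha, 1, fun _ => 1, fun y => ?_⟩
  refine ⟨fun _ => y, by simp, ?_⟩
  intro c hc
  funext i
  have : i = 0 := Subsingleton.elim _ _
  subst this
  simpa using hc.symm

theorem isFinExt_trans {L : Type v} [CommRing L] {M : Type v} [CommRing M]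
    {ℬ : GradedStr G L} {𝒞 : GradedStr G M} {φ : K →+* L} {ψ : L →+* M}
    (h1 : 𝒜.IsFinExt ℬ φ) (h2 : ℬ.IsFinExt 𝒞 ψ) : 𝒜.IsFinExt 𝒞 (ψ.comp φ) := by
  obtain ⟨hL, hφi, hφg, n, e, he⟩ := h1
  obtain ⟨hM, hψi, hψg, m, E, hE⟩ := h2
  refine ⟨hM, hψi.comp hφi, fun g a ha => hψg g _ (hφg g a ha), n * m, ?_⟩
  refine ⟨fun i => ψ (e (finProdFinEquiv.symm i).1) * E (finProdFinEquiv.symm i).2, fun y => ?_⟩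
  obtain ⟨b, hb, hbu⟩ := hE y
  choose cc hcc hccu using fun j => he (b j)
  refine ⟨fun i => cc (finProdFinEquiv.symm i).2 (finProdFinEquiv.symm i).1, ?_, ?_⟩
  · beta_reduce
    rw [hb]
    rw [← Equiv.sum_comp finProdFinEquiv
      (fun i => (ψ.comp φ) _ * (ψ (e (finProdFinEquiv.symm i).1) * E (finProdFinEquiv.symm i).2))]
    simp only [Equiv.symm_apply_apply]
    rw [Fintype.sum_prod_type_right]
    apply Finset.sum_congr rfl
    intro j _
    rw [show b j = ∑ i, φ (cc j i) * e i from hcc j, map_sum, Finset.sum_mul]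
    apply Finset.sum_congr rfl
    intro i _
    rw [map_mul, RingHom.comp_apply, mul_assoc]
  · intro c hc
    beta_reduce at hc
    have hy : y = ∑ j, ψ (∑ i, φ (c (finProdFinEquiv (i, j))) * e i) * E j := by
      rw [hc, ← Equiv.sum_comp finProdFinEquiv
        (fun i => (ψ.comp φ) (c i) * (ψ (e (finProdFinEquiv.symm i).1) * E (finProdFinEquiv.symm i).2))]
      simp only [Equiv.symm_apply_apply]
      rw [Fintype.sum_prod_type_right]
      apply Finset.sum_congr rfl
      intro j _
      rw [map_sum, Finset.sum_mul]
      apply Finset.sum_congr rfl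
      intro i _
      rw [map_mul, RingHom.comp_apply, mul_assoc]
    have hbj : ∀ j, (∑ i, φ (c (finProdFinEquiv (i, j))) * e i) = b j := by
      intro j
      exact congrFun (hbu _ hy).symm j ▸ rfl
    funext i
    have h3 : (fun i' => c (finProdFinEquiv (i', (finProdFinEquiv.symm i).2)))
        = cc (finProdFinEquiv.symm i).2 := by
      apply hccu
      exact (hbj (finProdFinEquiv.symm i).2).symm
    have := congrFun h3 (finProdFinEquiv.symm i).1
    rwa [Prod.mk.eta, Equiv.apply_symm_apply] at this

end GradedStr
set_option linter.unusedSectionVars false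
namespace GradedStr

open Polynomial

variable {G : Type u} [CommGroup G] {K : Type v} [CommRing K]
  (𝒜 : GradedStr G K) (g₀ : G)

theorem adjoin_isFinExt [Nontrivial K] (hK : 𝒜.IsGradedField) {p : K[X]} (hmon : p.Monic)
    (hd : 1 ≤ p.natDegree) {hp : G} (hph : p ∈ 𝒜.polyDeg g₀ hp)
    (hirr : ∀ q : K[X], q.Monic → (∃ h, q ∈ 𝒜.polyDeg g₀ h) → 1 ≤ q.natDegree →
      q.natDegree < p.natDegree → ¬ q ∣ p) :
    𝒜.IsFinExt (𝒜.adjoinStr g₀ hmon hd hp hph) (AdjoinRoot.of p) ∧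
      AdjoinRoot.root p ∈ (𝒜.adjoinStr g₀ hmon hd hp hph).deg g₀ := by
  set ℬ := 𝒜.adjoinStr g₀ hmon hd hp hph with hB
  have hmem : ∀ (x : AdjoinRoot p) (g : G), x ∈ ℬ.deg g ↔ aRep hmon x ∈ 𝒜.polyDeg g₀ g :=
    fun x g => Iff.rfl
  have hnt : Nontrivial (AdjoinRoot p) := by
    refine ⟨0, 1, fun h => ?_⟩
    have := congrArg (aRep hmon) h
    rw [aRep_zero, aRep_one hmon hd] at this
    exact zero_ne_one this
  constructor
  · refine ⟨⟨hnt, ?_⟩, ?_, ?_, ?_⟩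
    · -- homogeneous nonzero elements are units
      rintro x ⟨g, hx⟩ hx0
      rw [hmem] at hx
      have hrep0 : aRep hmon x ≠ 0 := fun h => hx0 ((aRep_eq_zero_iff hmon x).mp h)
      have hdeg : (aRep hmon x).natDegree < p.natDegree :=
        natDegree_lt_natDegree hrep0 (aRep_degree_lt hmon x)
      have := 𝒜.isUnit_mk_of_homog g₀ hK hmon hph hirr (aRep hmon x) ⟨g, hx⟩ hrep0 hdeg
      rwa [mk_aRep hmon x] at this
    · -- injectivity
      intro a b hab
      have := congrArg (aRep hmon) hab
      rw [aRep_of hmon hd, aRep_of hmon hd] at this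
      exact Polynomial.C_injective this
    · -- graded
      intro g a ha
      rw [hmem, aRep_of hmon hd]
      exact 𝒜.C_mem g₀ ha
    · -- power basis
      refine ⟨p.natDegree, fun i => (AdjoinRoot.root p) ^ (i : ℕ), fun y => ?_⟩
      have key : ∀ c : Fin p.natDegree → K,
          (∑ i, AdjoinRoot.of p (c i) * (AdjoinRoot.root p) ^ (i : ℕ))
            = AdjoinRoot.mk p (∑ i : Fin p.natDegree, Polynomial.C (c i) * Polynomial.X ^ (i : ℕ)) := by
        intro c
        rw [map_sum]
        apply Finset.sum_congr rfl
        intro i _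
        rw [map_mul, map_pow]
        rfl
      have key2 : ∀ c : Fin p.natDegree → K,
          aRep hmon (∑ i, AdjoinRoot.of p (c i) * (AdjoinRoot.root p) ^ (i : ℕ))
            = ∑ i : Fin p.natDegree, Polynomial.C (c i) * Polynomial.X ^ (i : ℕ) := by
        intro c
        rw [key, aRep_mk, modByMonic_eq_self_iff hmon]
        rw [degree_eq_natDegree hmon.ne_zero]
        exact degree_sum_fin_lt c
      refine ⟨fun i => (aRep hmon y).coeff (i : ℕ), ?_, ?_⟩
      · beta_reduce
        have hy : aRep hmon y
            = ∑ i : Fin p.natDegree, Polynomial.C ((aRep hmon y).coeff (i : ℕ)) * Polynomial.X ^ (i : ℕ) := by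
          have hlt : (aRep hmon y).natDegree < p.natDegree := by
            rcases eq_or_ne (aRep hmon y) 0 with h0 | h0
            · rw [h0]; simpa using (show 0 < p.natDegree by omega)
            · exact natDegree_lt_natDegree h0 (aRep_degree_lt hmon y)
          conv_lhs => rw [(aRep hmon y).as_sum_range' p.natDegree hlt]
          rw [← Fin.sum_univ_eq_sum_range (fun i => (Polynomial.monomial i) ((aRep hmon y).coeff i)) p.natDegree]
          apply Finset.sum_congr rfl
          intro i _
          rw [Polynomial.C_mul_X_pow_eq_monomial]
        rw [key, ← hy, mk_aRep]
      · intro c hc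
        beta_reduce at hc
        funext j
        have := congrArg (aRep hmon) hc
        rw [key2] at this
        have hco := congrArg (fun q => Polynomial.coeff q (j : ℕ)) this
        simp only [Polynomial.finset_sum_coeff, Polynomial.coeff_C_mul,
          Polynomial.coeff_X_pow] at hco
        rw [Finset.sum_eq_single j] at hco
        · simpa using hco.symm
        · intro i _ hne
          have : ¬ ((j : ℕ) = (i : ℕ)) := fun h => hne (Fin.ext h.symm)
          simp [this]
        · intro h; exact absurd (Finset.mem_univ j) h
  · -- the root is homogeneous of grading g₀
    rw [hmem]
    have : AdjoinRoot.root p = AdjoinRoot.mk p Polynomial.X := rfl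
    rw [this, aRep_mk]
    exact (𝒜.divByMonic_modByMonic_mem g₀ hmon hph (𝒜.X_mem g₀)).2

end GradedStr
set_option linter.unusedSectionVars false
namespace GradedStr

open Polynomial

variable {G : Type u} [CommGroup G] {K : Type v} [CommRing K]
  (𝒜 : GradedStr G K) (g₀ : G)

/-- Every nonzero homogeneous polynomial of positive degree has a minimal-degree
monic homogeneous divisor of positive degree. -/
theorem exists_min_divisor (hK : 𝒜.IsGradedField) {f : K[X]} (hf0 : f ≠ 0)
    (hfh : ∃ h, f ∈ 𝒜.polyDeg g₀ h) (hfd : 1 ≤ f.natDegree) :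
    ∃ p : K[X], p.Monic ∧ (∃ hp, p ∈ 𝒜.polyDeg g₀ hp) ∧ 1 ≤ p.natDegree ∧ p ∣ f ∧
      ∀ q : K[X], q.Monic → (∃ h, q ∈ 𝒜.polyDeg g₀ h) → 1 ≤ q.natDegree → q ∣ f →
        p.natDegree ≤ q.natDegree := by
  classical
  have : Nontrivial K := hK.1
  obtain ⟨h, hfh⟩ := hfh
  set P : ℕ → Prop := fun e => ∃ p : K[X], p.Monic ∧ (∃ hp, p ∈ 𝒜.polyDeg g₀ hp) ∧
    1 ≤ p.natDegree ∧ p ∣ f ∧ p.natDegree = e with hP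
  have hPex : ∃ e, P e := by
    -- normalize f
    have hlc0 : f.leadingCoeff ≠ 0 := leadingCoeff_ne_zero.mpr hf0
    have hlcm : f.leadingCoeff ∈ 𝒜.deg (h * (g₀ ^ f.natDegree)⁻¹) := hfh f.natDegree
    have hu : IsUnit f.leadingCoeff := hK.2 _ ⟨_, hlcm⟩ hlc0
    set u := hu.unit with huu
    have hucoe : (u : K) = f.leadingCoeff := hu.unit_spec
    set w : K := ((u⁻¹ : Kˣ) : K) with hw
    have hwl : w * f.leadingCoeff = 1 := by rw [hw, ← hucoe]; exact u.inv_mul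
    set f' := Polynomial.C w * f with hf'
    have hf'mon : f'.Monic := monic_C_mul_of_mul_leadingCoeff_eq_one hwl
    have hwmem : w ∈ 𝒜.deg (h * (g₀ ^ f.natDegree)⁻¹)⁻¹ := 𝒜.inv_mem hlcm u hucoe
    have hf'h : f' ∈ 𝒜.polyDeg g₀ ((h * (g₀ ^ f.natDegree)⁻¹)⁻¹ * h) :=
      𝒜.polyDeg_mul g₀ (𝒜.C_mem g₀ hwmem) hfh
    have hdf' : f'.natDegree = f.natDegree := by
      apply le_antisymm (natDegree_C_mul_le w f)
      have heq : f = Polynomial.C (f.leadingCoeff) * f' := by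
        rw [hf', ← mul_assoc, ← Polynomial.C_mul, mul_comm f.leadingCoeff w, hwl,
          Polynomial.C_1, one_mul]
      conv_lhs => rw [heq]
      exact natDegree_C_mul_le _ f'
    refine ⟨f.natDegree, f', hf'mon, ⟨_, hf'h⟩, ?_, ?_, hdf'⟩
    · omega
    · refine ⟨Polynomial.C (f.leadingCoeff), ?_⟩
      rw [mul_comm, ← mul_assoc, ← Polynomial.C_mul, mul_comm f.leadingCoeff w, hwl,
        Polynomial.C_1, one_mul]
  obtain ⟨p, hpm, hph, hp1, hpf, hpe⟩ := Nat.find_spec hPex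
  refine ⟨p, hpm, hph, hp1, hpf, ?_⟩
  intro q hqm hqh hq1 hqf
  rw [hpe]
  exact Nat.find_min' hPex ⟨q, hqm, hqh, hq1, hqf, rfl⟩

/-- Main splitting lemma, by induction on the degree. -/
theorem main_split : ∀ d : ℕ, ∀ (K : Type v) (instK : CommRing K) (𝒜 : GradedStr G K),
    𝒜.IsGradedField → ∀ f : K[X], f ≠ 0 → (∃ h, f ∈ 𝒜.polyDeg g₀ h) → f.natDegree = d →
    ∃ (L : Type v) (instL : CommRing L) (ℬ : GradedStr G L) (φ : K →+* L),
      𝒜.IsFinExt ℬ φ ∧ ∃ x : Fin d → L, (∀ i, x i ∈ ℬ.deg g₀) ∧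
        f.map φ = Polynomial.C (φ f.leadingCoeff) * ∏ i, (Polynomial.X - Polynomial.C (x i)) := by
  intro d
  induction d with
  | zero =>
    intro K instK 𝒜 hK f hf0 hfh hfd
    refine ⟨K, instK, 𝒜, RingHom.id K, 𝒜.isFinExt_refl hK, Fin.elim0, fun i => i.elim0, ?_⟩
    rw [Polynomial.map_id, Finset.univ_eq_empty, Finset.prod_empty, mul_one,
      RingHom.id_apply]
    conv_lhs => rw [eq_C_of_natDegree_eq_zero hfd]
    rw [Polynomial.leadingCoeff, hfd]
  | succ d IH =>
    intro K instK 𝒜 hK f hf0 hfh hfd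
    have hnt : Nontrivial K := hK.1
    obtain ⟨p, hpm, ⟨hp, hph⟩, hp1, hpf, hpmin⟩ :=
      𝒜.exists_min_divisor g₀ hK hf0 hfh (by omega)
    have hirr : ∀ q : K[X], q.Monic → (∃ h, q ∈ 𝒜.polyDeg g₀ h) → 1 ≤ q.natDegree →
        q.natDegree < p.natDegree → ¬ q ∣ p := by
      intro q hqm hqh hq1 hqd hdvd
      exact absurd (hpmin q hqm hqh hq1 (dvd_trans hdvd hpf)) (by omega)
    obtain ⟨hext, hroot⟩ := 𝒜.adjoin_isFinExt g₀ hK hpm hp1 hph hirr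
    set ℬ₁ := 𝒜.adjoinStr g₀ hpm hp1 hp hph with hB1
    set φ₁ := AdjoinRoot.of p with hphi
    set t := AdjoinRoot.root p with ht
    obtain ⟨hL1, hφ1i, hφ1g, hfree1⟩ := hext
    -- f has root t
    have hroot0 : (f.map φ₁).IsRoot t := by
      obtain ⟨w, hw⟩ := hpf
      rw [hw, Polynomial.map_mul, Polynomial.IsRoot, Polynomial.eval_mul]
      have h0 : (p.map φ₁).eval t = 0 := AdjoinRoot.isRoot_root p
      rw [h0, zero_mul]
    set f₁ := (f.map φ₁) /ₘ (Polynomial.X - Polynomial.C t) with hf₁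
    have hfac : (Polynomial.X - Polynomial.C t) * f₁ = f.map φ₁ :=
      mul_divByMonic_eq_iff_isRoot.mpr hroot0
    have hnt1 : Nontrivial (AdjoinRoot p) := hL1.1
    have hmap0 : f.map φ₁ ≠ 0 := fun h0 => hf0 ((Polynomial.map_eq_zero_iff hφ1i).mp h0)
    have hf₁0 : f₁ ≠ 0 := by
      intro h0; rw [h0, mul_zero] at hfac; exact hmap0 hfac.symm
    obtain ⟨h, hfh⟩ := hfh
    have hmaph : f.map φ₁ ∈ ℬ₁.polyDeg g₀ h := 𝒜.polyDeg_map g₀ ℬ₁ φ₁ hφ1g hfh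
    have hXt : (Polynomial.X - Polynomial.C t) ∈ ℬ₁.polyDeg g₀ g₀ :=
      (ℬ₁.polyDeg g₀ g₀).sub_mem (ℬ₁.X_mem g₀) (ℬ₁.C_mem g₀ hroot)
    have hmonXt : (Polynomial.X - Polynomial.C t).Monic := Polynomial.monic_X_sub_C t
    have hf₁h : f₁ ∈ ℬ₁.polyDeg g₀ (g₀⁻¹ * h) :=
      (ℬ₁.divByMonic_modByMonic_mem g₀ hmonXt hXt hmaph).1
    have hdmap : (f.map φ₁).natDegree = d + 1 := by
      rw [natDegree_map_eq_of_injective hφ1i, hfd]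
    have hlcf₁ : (Polynomial.X - Polynomial.C t).leadingCoeff * f₁.leadingCoeff ≠ 0 := by
      rw [leadingCoeff_X_sub_C, one_mul]
      exact leadingCoeff_ne_zero.mpr hf₁0
    have hdf₁ : f₁.natDegree = d := by
      have h1 : ((Polynomial.X - Polynomial.C t) * f₁).natDegree
          = 1 + f₁.natDegree := by
        rw [natDegree_mul' hlcf₁, natDegree_X_sub_C]
      rw [hfac, hdmap] at h1
      omega
    obtain ⟨L, instL, ℬ, ψ, hext2, x', hx'deg, hx'eq⟩ :=
      IH (AdjoinRoot p) _ ℬ₁ hL1 f₁ hf₁0 ⟨_, hf₁h⟩ hdf₁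
    refine ⟨L, instL, ℬ, ψ.comp φ₁,
      𝒜.isFinExt_trans ⟨hL1, hφ1i, hφ1g, hfree1⟩ hext2, Fin.cons (ψ t) x', ?_, ?_⟩
    · intro i
      refine Fin.cases ?_ ?_ i
      · rw [Fin.cons_zero]
        exact hext2.2.2.1 g₀ t hroot
      · intro j
        rw [Fin.cons_succ]
        exact hx'deg j
    · rw [← Polynomial.map_map, ← hfac, Polynomial.map_mul, hx'eq,
        Polynomial.map_sub, Polynomial.map_X, Polynomial.map_C, Fin.prod_univ_succ]
      simp only [Fin.cons_zero, Fin.cons_succ]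
      have hlc : ψ f₁.leadingCoeff = (ψ.comp φ₁) f.leadingCoeff := by
        rw [RingHom.comp_apply]
        congr 1
        have h2 : (f.map φ₁).leadingCoeff = f₁.leadingCoeff := by
          rw [← hfac, leadingCoeff_mul' hlcf₁, leadingCoeff_X_sub_C, one_mul]
        rw [← h2, leadingCoeff_map_of_injective hφ1i]
      rw [hlc]
      ring

end GradedStr

/-- Let `K` be a `G`-graded field, `g₀ ∈ G`, and `f` a nonzero
homogeneous polynomial in `K[g₀⁻¹T]`.  There is a finite extension of `G`-graded
fields `L/K` (an injective graded ring homomorphism `φ : K → L` into a graded field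
`L` that is free of finite rank over `K`) such that `f` splits completely in
`L[g₀⁻¹T]` into a product of homogeneous polynomials of degree at most `1`; in
particular, if `f` is monic then `f = (T - x₁) ⋯ (T - x_n)` with each `x_i` a
homogeneous element of `L` of grading `g₀`. -/
theorem graded_splitting_field_exists
    {G : Type u} [CommGroup G] {K : Type v} [CommRing K]
    (𝒜 : GradedStr G K) (hK : 𝒜.IsGradedField) (g₀ : G)
    (f : Polynomial K) (hf0 : f ≠ 0) (hfhom : 𝒜.IsHomogPoly g₀ f) :
    ∃ (L : Type v) (_ : CommRing L) (ℬ : GradedStr G L) (φ : K →+* L),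
      ℬ.IsGradedField ∧ Function.Injective φ ∧
      (∀ g : G, ∀ a ∈ 𝒜.deg g, φ a ∈ ℬ.deg g) ∧
      (∃ (n : ℕ) (e : Fin n → L), ∀ y : L, ∃! c : Fin n → K,
        y = ∑ i, φ (c i) * e i) ∧
      (∃ (m : ℕ) (q : Fin m → Polynomial L),
        (∀ i, ℬ.IsHomogPoly g₀ (q i) ∧ (q i).natDegree ≤ 1) ∧
        f.map φ = ∏ i, q i) ∧
      (f.Monic → ∃ x : Fin f.natDegree → L, (∀ i, x i ∈ ℬ.deg g₀) ∧
        f.map φ = ∏ i, (Polynomial.X - Polynomial.C (x i))) := by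
  obtain ⟨h, hfh'⟩ := hfhom
  obtain ⟨L, instL, ℬ, φ, ⟨hLf, hinj, hgr, hfree⟩, x, hxdeg, hxeq⟩ :=
    GradedStr.main_split g₀ f.natDegree K _ 𝒜 hK f hf0 ⟨h, hfh'⟩ rfl
  have hntL : Nontrivial L := hLf.1
  refine ⟨L, instL, ℬ, φ, hLf, hinj, hgr, hfree, ?_, ?_⟩
  · refine ⟨f.natDegree + 1,
      Fin.cons (Polynomial.C (φ f.leadingCoeff))
        (fun i => Polynomial.X - Polynomial.C (x i)), ?_, ?_⟩
    · intro i
      refine Fin.cases ?_ ?_ i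
      · rw [Fin.cons_zero]
        constructor
        · exact ⟨h * (g₀ ^ f.natDegree)⁻¹, ℬ.C_mem g₀ (hgr _ _ (hfh' f.natDegree))⟩
        · rw [Polynomial.natDegree_C]
          omega
      · intro j
        rw [Fin.cons_succ]
        constructor
        · exact ⟨g₀, (ℬ.polyDeg g₀ g₀).sub_mem (ℬ.X_mem g₀) (ℬ.C_mem g₀ (hxdeg j))⟩
        · rw [Polynomial.natDegree_X_sub_C]
    · rw [hxeq, Fin.prod_univ_succ]
      simp only [Fin.cons_zero, Fin.cons_succ]
  · intro hmonf
    refine ⟨x, hxdeg, ?_⟩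
    rw [hxeq, hmonf.leadingCoeff, map_one, Polynomial.C_1, one_mul]
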